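/- Suppose a_Q ∈ Q is such that for every face F of Q there exists a_F ∈ F with a_F + Q^F ⊆ Q and τ_i(a_F) ≤ τ_i(a_Q) for all i = 1, …, r. Then for every α in the essential set ℰ of Q and every h ∈ ℋ, τ(α + a_Q) ∈ ⟨h⟩; that is, ℰ + a_Q ⊆ ⋂_{h ∈ ℋ} τ^{-1}(⟨h⟩). -/
import Mathlib


/-- The shift `α + S = {α + s : s ∈ S}` of a set `S ⊆ ℤ^d` by `α ∈ ℤ^d`. -/
def shiftSet {d : ℕ} (α : Fin d → ℤ) (S : Set (Fin d → ℤ)) : Set (Fin d → ℤ) :=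
  (α + ·) '' S

/-- An essential point for `Q` is an `ε ∈ ℤ^d` such that whenever `a ∈ Q` satisfies
`(a + ε + Q) ∩ Q = (ε + Q) ∩ Q`, `a` is a unit of `Q` (i.e. `-a ∈ Q`). -/
def essentialPoint {d : ℕ} (Q : AddSubmonoid (Fin d → ℤ)) (ε : Fin d → ℤ) : Prop :=
  ∀ a ∈ Q, shiftSet (a + ε) (Q : Set (Fin d → ℤ)) ∩ (Q : Set (Fin d → ℤ)) =
      shiftSet ε (Q : Set (Fin d → ℤ)) ∩ (Q : Set (Fin d → ℤ)) → -a ∈ Q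

/-- The essential set `ℰ` of `Q`: the `Q`-set generated by the essential points. -/
def essentialSet {d : ℕ} (Q : AddSubmonoid (Fin d → ℤ)) : Set (Fin d → ℤ) :=
  {x | ∃ ε q, essentialPoint Q ε ∧ q ∈ Q ∧ x = ε + q}

/-- For `h ∈ ℕ^r`, the set `⟨h⟩ = {ζ ∈ ℤ^r : ζ_i > −h_i for some i with h_i > 0}`. -/
def angleSet {r : ℕ} (h : Fin r → ℕ) : Set (Fin r → ℤ) :=
  {ζ | ∃ i, 0 < h i ∧ -(h i : ℤ) < ζ i}

/-- The image `τ(Q) ⊆ ℕ^r` of `Q` under `τ` (which is nonnegative on `Q`). -/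
def tauImage {d r : ℕ} (Q : AddSubmonoid (Fin d → ℤ))
    (τ : Fin r → ((Fin d → ℤ) →+ ℤ)) : Set (Fin r → ℕ) :=
  {v | ∃ q ∈ Q, ∀ i, (v i : ℤ) = τ i q}

/-- The Hilbert basis `ℋ` of `τ(Q)`: the nonzero elements of `τ(Q)` that cannot be
written as a sum of two nonzero elements of `τ(Q)`. -/
def hilbertBasisOf {d r : ℕ} (Q : AddSubmonoid (Fin d → ℤ))
    (τ : Fin r → ((Fin d → ℤ) →+ ℤ)) : Set (Fin r → ℕ) :=
  {h ∈ tauImage Q τ | h ≠ 0 ∧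
    ∀ a ∈ tauImage Q τ, ∀ b ∈ tauImage Q τ, a ≠ 0 → b ≠ 0 → h ≠ a + b}

/-- A face of `Q`: a submonoid `F ⊆ Q` such that `a + b ∈ F` with `a, b ∈ Q` forces
`a ∈ F` and `b ∈ F`. -/
def IsFaceOfMonoid {d : ℕ} (Q F : AddSubmonoid (Fin d → ℤ)) : Prop :=
  (F : Set (Fin d → ℤ)) ⊆ (Q : Set (Fin d → ℤ)) ∧
    ∀ a ∈ Q, ∀ b ∈ Q, a + b ∈ F → a ∈ F ∧ b ∈ F

/-- The saturation `Q^sat = {x ∈ ℤ^d : n • x ∈ Q for some integer n ≥ 1}`. -/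
def saturationOf {d : ℕ} (Q : AddSubmonoid (Fin d → ℤ)) : Set (Fin d → ℤ) :=
  {x | ∃ n : ℕ, 1 ≤ n ∧ n • x ∈ Q}

/-- The partial saturation `Q^F = (Q + F^gp) ∩ Q^sat` of `Q` at a face `F`. -/
def partialSat {d : ℕ} (Q F : AddSubmonoid (Fin d → ℤ)) : Set (Fin d → ℤ) :=
  {x | ∃ q ∈ Q, ∃ g ∈ AddSubgroup.closure (F : Set (Fin d → ℤ)), x = q + g} ∩
    saturationOf Q

/-- Suppose `a_Q ∈ Q` is such that for every face `F` of `Q` there is `a_F ∈ F` with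
`a_F + Q^F ⊆ Q` and `τ_i(a_F) ≤ τ_i(a_Q)` for all `i`.  Then for every `α` in the
essential set `ℰ` of `Q` and every `h ∈ ℋ`, `τ(α + a_Q) ∈ ⟨h⟩`; that is,
`ℰ + a_Q ⊆ ⋂_{h ∈ ℋ} τ⁻¹(⟨h⟩)`. -/
theorem stmt13 {d r : ℕ} (Q : AddSubmonoid (Fin d → ℤ)) (hFG : Q.FG)
    (hgp : AddSubgroup.closure (Q : Set (Fin d → ℤ)) = ⊤)
    (τ : Fin r → ((Fin d → ℤ) →+ ℤ))
    (hτQ : ∀ i, ∀ x ∈ Q, 0 ≤ τ i x)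
    (hsat : saturationOf Q = {x : Fin d → ℤ | ∀ i, 0 ≤ τ i x})
    (aQ : Fin d → ℤ) (haQ : aQ ∈ Q)
    (haQF : ∀ F : AddSubmonoid (Fin d → ℤ), IsFaceOfMonoid Q F →
      ∃ aF ∈ F, (∀ x ∈ partialSat Q F, aF + x ∈ Q) ∧ ∀ i, τ i aF ≤ τ i aQ) :
    ∀ α ∈ essentialSet Q, ∀ h ∈ hilbertBasisOf Q τ,
      (fun i => τ i (α + aQ)) ∈ angleSet h := by
  rintro α ⟨ε, q, hε, hq, rfl⟩ h ⟨⟨b, hb, hτb⟩, hne, -⟩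
  by_contra hcon
  simp only [angleSet, Set.mem_setOf_eq, not_exists, not_and, not_lt] at hcon
  -- hcon : ∀ i, 0 < h i → τ i (ε + q + aQ) ≤ -(h i)
  have hnb : -b ∈ Q := by
    apply hε b hb
    apply Set.Subset.antisymm
    · rintro x ⟨hx1, hx2⟩
      obtain ⟨s, hs, rfl⟩ := hx1
      exact ⟨⟨b + s, Q.add_mem hb hs, by ring⟩, hx2⟩
    · rintro x ⟨hx1, hx2⟩
      obtain ⟨w, hw, rfl⟩ := hx1
      refine ⟨⟨w - b, ?_, by ring⟩, hx2⟩
      -- show w - b ∈ Q, given hw : w ∈ Q, hx2 : ε + w ∈ Q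
      have hw' : ∀ i, 0 < h i → τ i aQ ≤ τ i (w - b) := by
        intro i hi
        have h1 := hcon i hi
        have h2 := hτQ i (ε + w) hx2
        have h3 := hτQ i q hq
        have hb' := hτb i
        simp only [map_add, map_sub] at h1 h2 ⊢
        linarith
      set J : Set (Fin r) := {j | τ j (w - b) < τ j aQ} with hJdef
      have hJS : ∀ j ∈ J, h j = 0 := by
        intro j hj
        by_contra h0
        exact absurd (hw' j (Nat.pos_of_ne_zero h0)) (not_le.mpr hj)
      set F : AddSubmonoid (Fin d → ℤ) :=
        { carrier := {x | x ∈ Q ∧ ∀ j ∈ J, τ j x = 0}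
          zero_mem' := ⟨Q.zero_mem, fun j _ => map_zero _⟩
          add_mem' := fun {x y} hx hy => ⟨Q.add_mem hx.1 hy.1,
            fun j hj => by rw [map_add, hx.2 j hj, hy.2 j hj, add_zero]⟩ } with hFdef
      have hmemF : ∀ x, x ∈ F ↔ x ∈ Q ∧ ∀ j ∈ J, τ j x = 0 := fun x => Iff.rfl
      have hface : IsFaceOfMonoid Q F := by
        constructor
        · intro x hx
          exact ((hmemF x).mp hx).1
        · intro x hxQ y hyQ hxy
          obtain ⟨-, hxy2⟩ := (hmemF _).mp hxy
          have hz : ∀ j ∈ J, τ j x = 0 ∧ τ j y = 0 := by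
            intro j hj
            have h0 := hxy2 j hj
            have h1 := hτQ j x hxQ
            have h2 := hτQ j y hyQ
            rw [map_add] at h0
            constructor <;> linarith
          exact ⟨(hmemF x).mpr ⟨hxQ, fun j hj => (hz j hj).1⟩,
                 (hmemF y).mpr ⟨hyQ, fun j hj => (hz j hj).2⟩⟩
      obtain ⟨a', ha'F, ha'abs, ha'τ⟩ := haQF F hface
      obtain ⟨ha'Q, ha'J⟩ := (hmemF a').mp ha'F
      have hbF : b ∈ F := by
        refine (hmemF b).mpr ⟨hb, fun j hj => ?_⟩
        rw [← hτb j, hJS j hj]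
        rfl
      have hy : (w - b - a') ∈ partialSat Q F := by
        constructor
        · refine ⟨w, hw, -(b + a'), ?_, by ring⟩
          exact neg_mem (AddSubgroup.subset_closure (F.add_mem hbF ha'F))
        · rw [hsat]
          intro i
          by_cases hiJ : i ∈ J
          · have h1 : τ i a' = 0 := ha'J i hiJ
            have h2 : (h i : ℤ) = 0 := by rw [hJS i hiJ]; rfl
            have h3 := hτQ i w hw
            have hb' := hτb i
            simp only [map_sub]
            linarith
          · have h1 : τ i aQ ≤ τ i (w - b) := not_lt.mp hiJ
            have h2 := ha'τ i
            simp only [map_sub] at h1 ⊢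
            linarith
      have habs := ha'abs _ hy
      have heq : a' + (w - b - a') = w - b := by ring
      rwa [heq] at habs
  obtain ⟨i, hi⟩ : ∃ i, 0 < h i := by
    by_contra h0
    push_neg at h0
    exact hne (funext fun i => Nat.le_zero.mp (h0 i))
  have h1 := hτQ i (-b) hnb
  have h2 := hτb i
  rw [map_neg, ← h2] at h1 <;> omega
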